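/- Let r ≥ 2 be an integer, let λ > 0, let ε ∈ (0,1), set b_c = (1 - 1/r)·((r-1)!/λ)^{1/(r-1)}, and suppose 0 < a ≤ (1-ε)·b_c. Define x_0 = a and x_{t+1} = λ·x_t^r/r! + a, and let Δ(t) = x_{t+1} - x_t. Then Δ(t) is nonnegative and nonincreasing in t with Δ(t) → 0 as t → ∞, and for every η > 0 there exists τ = τ(r, ε, η), depending only on r, ε and η (and not on λ or a), such that Δ(τ) ≤ η·b_c. -/

import Mathlib

open Filter

/-- The critical value `b_c = (1 - 1/r) · ((r-1)!/λ)^(1/(r-1))` for the one-step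
infection recursion `f(x) = λ x^r / r! + a` of bootstrap percolation. -/
noncomputable def bcrit (r : ℕ) (lam : ℝ) : ℝ :=
  (1 - 1 / (r : ℝ)) * (((r - 1).factorial : ℝ) / lam) ^ ((1 : ℝ) / ((r : ℝ) - 1))

/-- **Increments of the subcritical recursion.** For `0 < a ≤ (1-ε) b_c`, `x₀ = a`,
`x_{t+1} = λ x_t^r / r! + a` and `Δ(t) = x_{t+1} - x_t`: the increments `Δ(t)` are
nonnegative, nonincreasing, and tend to `0`; moreover for every `η > 0` there is a
`τ = τ(r, ε, η)`, depending only on `r`, `ε` and `η` (not on `λ` or `a`), with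
`Δ(τ) ≤ η b_c`. -/
private lemma pow_succ_sub_le (z : ℝ) :
    ∀ n : ℕ, ∀ x y : ℝ, 0 ≤ y → y ≤ x → x ≤ z →
      x ^ (n + 1) - y ^ (n + 1) ≤ ((n : ℝ) + 1) * z ^ n * (x - y)
  | 0, x, y, hy, hxy, hxz => by simp
  | (n+1), x, y, hy, hxy, hxz => by
    have ih := pow_succ_sub_le z n x y hy hxy hxz
    have hx : 0 ≤ x := hy.trans hxy
    have hz : 0 ≤ z := hx.trans hxz
    have hA : 0 ≤ x ^ (n+1) - y ^ (n+1) :=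
      sub_nonneg.2 (pow_le_pow_left₀ hy hxy _)
    have h1 : y ^ (n+1) ≤ z ^ (n+1) := pow_le_pow_left₀ hy (hxy.trans hxz) _
    have h2 : x * (x ^ (n+1) - y ^ (n+1)) ≤ z * (x ^ (n+1) - y ^ (n+1)) :=
      mul_le_mul_of_nonneg_right hxz hA
    have h3 : z * (x ^ (n+1) - y ^ (n+1)) ≤ z * (((n : ℝ) + 1) * z ^ n * (x - y)) :=
      mul_le_mul_of_nonneg_left ih hz
    have h4 : (x - y) * y ^ (n+1) ≤ (x - y) * z ^ (n+1) :=
      mul_le_mul_of_nonneg_left h1 (sub_nonneg.2 hxy)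
    have key : x ^ (n+2) - y ^ (n+2)
        = x * (x ^ (n+1) - y ^ (n+1)) + (x - y) * y ^ (n+1) := by ring
    have e : z * (((n : ℝ) + 1) * z ^ n * (x - y)) + (x - y) * z ^ (n+1)
        = (((n:ℝ) + 1) + 1) * z ^ (n+1) * (x - y) := by ring
    push_cast
    linarith [key, e, h2, h3, h4]

set_option maxHeartbeats 1600000 in
private lemma aux_rec (r : ℕ) (hr : 2 ≤ r) (ε : ℝ) (hε0 : 0 < ε) (hε1 : ε < 1)
    (lam a : ℝ) (hlam : 0 < lam) (ha : 0 < a) (hab : a ≤ (1 - ε) * bcrit r lam)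
    (x : ℕ → ℝ) (hx0 : x 0 = a)
    (hrec : ∀ t, x (t + 1) = lam * (x t) ^ r / (r.factorial : ℝ) + a) :
    (∀ t, 0 ≤ x (t + 1) - x t) ∧
    (∀ t, x (t + 2) - x (t + 1) ≤ (1 - ε * (1 - 1 / (r : ℝ))) * (x (t + 1) - x t)) ∧
    x 1 - x 0 ≤ bcrit r lam := by
  set M : ℝ := (((r - 1).factorial : ℝ) / lam) ^ ((1 : ℝ) / ((r : ℝ) - 1)) with hMdef
  set c : ℝ := 1 - ε * (1 - 1 / (r : ℝ)) with hcdef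
  have hr2 : (2 : ℝ) ≤ (r : ℝ) := by exact_mod_cast hr
  have hrpos : (0 : ℝ) < (r : ℝ) := by linarith
  have hrsub : ((r - 1 : ℕ) : ℝ) = (r : ℝ) - 1 := by
    have : 1 ≤ r := by omega
    push_cast [Nat.cast_sub this]; ring
  have hrne : (r : ℝ) - 1 ≠ 0 := by intro h; nlinarith
  have hFpos : (0 : ℝ) < ((r - 1).factorial : ℝ) := by
    exact_mod_cast Nat.factorial_pos _
  have hbpos : (0 : ℝ) < ((r - 1).factorial : ℝ) / lam := div_pos hFpos hlam
  have hM : 0 < M := Real.rpow_pos_of_pos hbpos _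
  have hMpow : M ^ (r - 1) = ((r - 1).factorial : ℝ) / lam := by
    rw [hMdef, ← Real.rpow_natCast _ (r - 1), ← Real.rpow_mul hbpos.le, hrsub]
    rw [one_div, inv_mul_cancel₀ hrne, Real.rpow_one]
  have hlamM : lam * M ^ (r - 1) = ((r - 1).factorial : ℝ) := by
    rw [hMpow]; field_simp
  have hfact : (r.factorial : ℝ) = (r : ℝ) * ((r - 1).factorial : ℝ) := by
    rw [← Nat.mul_factorial_pred (by omega : r ≠ 0)]; push_cast; ring
  have hfactpos : (0 : ℝ) < (r.factorial : ℝ) := by exact_mod_cast Nat.factorial_pos r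
  have hMr : M ^ r = M ^ (r - 1) * M := by
    rw [← pow_succ]; congr 1; omega
  have hbc : bcrit r lam = (1 - 1 / (r : ℝ)) * M := rfl
  clear_value M
  have h1r : 0 < 1 / (r : ℝ) := by positivity
  have h1r2 : 1 / (r : ℝ) ≤ 1 / 2 := by
    rw [div_le_div_iff₀ hrpos (by norm_num)]; linarith
  have hc0 : 0 < c := by
    rw [hcdef]; nlinarith [mul_pos hε0 h1r]
  have hc1 : c < 1 := by
    rw [hcdef]; nlinarith [mul_pos hε0 (by linarith : (0:ℝ) < 1 - 1 / (r:ℝ))]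
  clear_value c
  -- a ≤ (c - 1/r) * M
  have ha' : a ≤ (c - 1 / (r : ℝ)) * M := by
    rw [hbc] at hab
    have : (1 - ε) * ((1 - 1 / (r:ℝ)) * M) = (c - 1 / (r:ℝ)) * M := by
      rw [hcdef]; ring
    linarith [hab, this ▸ hab]
  -- the key computation lam * (c*M)^r / r! = c^r * M / r
  have ecM : lam * (c * M) ^ r / (r.factorial : ℝ) = c ^ r * M / (r : ℝ) := by
    calc lam * (c * M) ^ r / (r.factorial : ℝ)
        = (c ^ r * (lam * M ^ (r - 1)) * M) / ((r : ℝ) * ((r - 1).factorial : ℝ)) := by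
          rw [hfact, mul_pow, hMr]; ring
      _ = (c ^ r * ((r - 1).factorial : ℝ) * M) / ((r : ℝ) * ((r - 1).factorial : ℝ)) := by
          rw [hlamM]
      _ = c ^ r * M / (r : ℝ) := by
          field_simp
  -- invariant: nonneg, bounded by c*M, monotone
  have key : ∀ t, 0 ≤ x t ∧ x t ≤ c * M ∧ x t ≤ x (t + 1) := by
    intro t
    induction t with
    | zero =>
      refine ⟨by rw [hx0]; exact ha.le, ?_, ?_⟩
      · rw [hx0]
        have : (c - 1 / (r : ℝ)) * M ≤ c * M := by nlinarith [hM.le, h1r]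
        exact ha'.trans this
      · rw [hrec 0, hx0]
        have : 0 ≤ lam * a ^ r / (r.factorial : ℝ) :=
          div_nonneg (mul_nonneg hlam.le (pow_nonneg ha.le r)) hfactpos.le
        linarith
    | succ t ih =>
      obtain ⟨h0, h1, h2⟩ := ih
      have h0' : 0 ≤ x (t + 1) := h0.trans h2
      have hbound : x (t + 1) ≤ c * M := by
        rw [hrec t]
        have hp : (x t) ^ r ≤ (c * M) ^ r := pow_le_pow_left₀ h0 h1 r
        have hd : lam * (x t) ^ r / (r.factorial : ℝ) ≤ lam * (c * M) ^ r / (r.factorial : ℝ) := by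
          gcongr
        rw [ecM] at hd
        have hcr : c ^ r ≤ 1 := pow_le_one₀ hc0.le hc1.le
        have h5 : c ^ r * M / (r : ℝ) ≤ M / (r : ℝ) := by
          have h5' : c ^ r * M ≤ M := by nlinarith [hM.le]
          exact div_le_div_of_nonneg_right h5' hrpos.le
        have h6 : M / (r : ℝ) + (c - 1 / (r : ℝ)) * M = c * M := by
          field_simp; ring
        linarith
      refine ⟨h0', hbound, ?_⟩
      have hp : (x t) ^ r ≤ (x (t + 1)) ^ r := pow_le_pow_left₀ h0 h2 r
      have h7 : lam * (x t) ^ r / (r.factorial : ℝ) ≤ lam * (x (t + 1)) ^ r / (r.factorial : ℝ) := by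
        gcongr
      linarith [hrec t, hrec (t + 1), h7]
  have hnn : ∀ t, 0 ≤ x (t + 1) - x t := fun t => sub_nonneg.2 (key t).2.2
  refine ⟨hnn, ?_, ?_⟩
  · -- contraction
    intro t
    obtain ⟨h0, h1, h2⟩ := key t
    obtain ⟨h0', h1', h2'⟩ := key (t + 1)
    have hcMnn : 0 ≤ c * M := mul_nonneg hc0.le hM.le
    have hsub := pow_succ_sub_le (c * M) (r - 1) (x (t + 1)) (x t) h0 h2 h1'
    have hre : r - 1 + 1 = r := by omega
    rw [hre, hrsub] at hsub
    have e2 : x (t + 2) - x (t + 1) = lam * ((x (t + 1)) ^ r - (x t) ^ r) / (r.factorial : ℝ) := by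
      rw [hrec (t + 1), hrec t]; ring
    have hstep : lam * ((x (t + 1)) ^ r - (x t) ^ r) / (r.factorial : ℝ)
        ≤ lam * (((r : ℝ) - 1 + 1) * (c * M) ^ (r - 1) * (x (t + 1) - x t)) / (r.factorial : ℝ) := by
      gcongr
    have e3 : lam * (((r : ℝ) - 1 + 1) * (c * M) ^ (r - 1) * (x (t + 1) - x t)) / (r.factorial : ℝ)
        = c ^ (r - 1) * (x (t + 1) - x t) := by
      calc lam * (((r : ℝ) - 1 + 1) * (c * M) ^ (r - 1) * (x (t + 1) - x t)) / (r.factorial : ℝ)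
          = (c ^ (r - 1) * (x (t + 1) - x t) * (lam * M ^ (r - 1)) * (r : ℝ))
            / ((r : ℝ) * ((r - 1).factorial : ℝ)) := by
            rw [hfact, mul_pow]; ring
        _ = (c ^ (r - 1) * (x (t + 1) - x t) * ((r - 1).factorial : ℝ) * (r : ℝ))
            / ((r : ℝ) * ((r - 1).factorial : ℝ)) := by rw [hlamM]
        _ = c ^ (r - 1) * (x (t + 1) - x t) := by
            field_simp
    have hcc : c ^ (r - 1) ≤ c := by
      have := pow_le_pow_of_le_one hc0.le hc1.le (by omega : 1 ≤ r - 1)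
      simpa using this
    have hfin : c ^ (r - 1) * (x (t + 1) - x t) ≤ c * (x (t + 1) - x t) :=
      mul_le_mul_of_nonneg_right hcc (hnn t)
    calc x (t + 2) - x (t + 1)
        ≤ c ^ (r - 1) * (x (t + 1) - x t) := by rw [e2]; linarith [hstep, e3 ▸ hstep]
      _ ≤ c * (x (t + 1) - x t) := hfin
  · -- Δ 0 ≤ bcrit
    rw [hrec 0, hx0, hbc]
    have hp : a ^ r ≤ (c * M) ^ r := pow_le_pow_left₀ ha.le (by rw [← hx0]; exact (key 0).2.1) r
    have hd : lam * a ^ r / (r.factorial : ℝ) ≤ lam * (c * M) ^ r / (r.factorial : ℝ) := by gcongr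
    rw [ecM] at hd
    have hcr : c ^ r ≤ 1 := pow_le_one₀ hc0.le hc1.le
    have h5 : c ^ r * M / (r : ℝ) ≤ M / (r : ℝ) := by
      have h5' : c ^ r * M ≤ M := by nlinarith [hM.le]
      exact div_le_div_of_nonneg_right h5' hrpos.le
    have h6 : M / (r : ℝ) ≤ (1 - 1 / (r : ℝ)) * M := by
      rw [div_le_iff₀ hrpos]
      have : (1 : ℝ) / (r : ℝ) * (r : ℝ) = 1 := by field_simp
      nlinarith [hM.le, h1r2]
    linarith

theorem infection_recursion_subcritical_increments
    (r : ℕ) (hr : 2 ≤ r) (ε η : ℝ) (hε0 : 0 < ε) (hε1 : ε < 1) (hη : 0 < η) :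
    (∀ lam a : ℝ, 0 < lam → 0 < a → a ≤ (1 - ε) * bcrit r lam →
      ∀ x : ℕ → ℝ, x 0 = a →
        (∀ t, x (t + 1) = lam * (x t) ^ r / (r.factorial : ℝ) + a) →
        (∀ t, 0 ≤ x (t + 1) - x t) ∧
        Antitone (fun t => x (t + 1) - x t) ∧
        Tendsto (fun t => x (t + 1) - x t) atTop (nhds 0)) ∧
    ∃ τ : ℕ, ∀ lam a : ℝ, 0 < lam → 0 < a → a ≤ (1 - ε) * bcrit r lam →
      ∀ x : ℕ → ℝ, x 0 = a →
        (∀ t, x (t + 1) = lam * (x t) ^ r / (r.factorial : ℝ) + a) →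
        x (τ + 1) - x τ ≤ η * bcrit r lam := by
  have hr2 : (2 : ℝ) ≤ (r : ℝ) := by exact_mod_cast hr
  have hrpos : (0 : ℝ) < (r : ℝ) := by linarith
  have h1r : 0 < 1 / (r : ℝ) := by positivity
  set c : ℝ := 1 - ε * (1 - 1 / (r : ℝ)) with hcdef
  have h1rlt : 1 / (r : ℝ) < 1 := by
    rw [div_lt_one hrpos]; linarith
  have hc0 : 0 < c := by
    rw [hcdef]; nlinarith [mul_pos hε0 h1r]
  have hc1 : c < 1 := by
    rw [hcdef]; nlinarith [mul_pos hε0 (by linarith : (0:ℝ) < 1 - 1 / (r:ℝ))]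
  clear_value c
  -- geometric decay of the increments, for any admissible lam, a, x
  have hgeo : ∀ lam a : ℝ, 0 < lam → 0 < a → a ≤ (1 - ε) * bcrit r lam →
      ∀ x : ℕ → ℝ, x 0 = a →
        (∀ t, x (t + 1) = lam * (x t) ^ r / (r.factorial : ℝ) + a) →
        ∀ t, x (t + 1) - x t ≤ c ^ t * bcrit r lam := by
    intro lam a hlam ha hab x hx0 hrec
    obtain ⟨h1, h2, h3⟩ := aux_rec r hr ε hε0 hε1 lam a hlam ha hab x hx0 hrec
    rw [← hcdef] at h2
    intro t
    induction t with
    | zero => simpa using h3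
    | succ t ih =>
      calc x (t + 2) - x (t + 1) ≤ c * (x (t + 1) - x t) := h2 t
        _ ≤ c * (c ^ t * bcrit r lam) := mul_le_mul_of_nonneg_left ih hc0.le
        _ = c ^ (t + 1) * bcrit r lam := by ring
  constructor
  · intro lam a hlam ha hab x hx0 hrec
    obtain ⟨h1, h2, h3⟩ := aux_rec r hr ε hε0 hε1 lam a hlam ha hab x hx0 hrec
    rw [← hcdef] at h2
    refine ⟨h1, antitone_nat_of_succ_le fun t => ?_, ?_⟩
    · calc x (t + 1 + 1) - x (t + 1) ≤ c * (x (t + 1) - x t) := h2 t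
        _ ≤ 1 * (x (t + 1) - x t) := mul_le_mul_of_nonneg_right hc1.le (h1 t)
        _ = x (t + 1) - x t := one_mul _
    · have hb0 : 0 ≤ bcrit r lam := by
        by_contra hb
        push_neg at hb
        nlinarith [hab, ha]
      apply squeeze_zero h1 (hgeo lam a hlam ha hab x hx0 hrec)
      have := (tendsto_pow_atTop_nhds_zero_of_lt_one hc0.le hc1).mul_const (bcrit r lam)
      simpa using this
  · obtain ⟨τ, hτ⟩ := exists_pow_lt_of_lt_one hη hc1
    refine ⟨τ, fun lam a hlam ha hab x hx0 hrec => ?_⟩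
    have hb0 : 0 ≤ bcrit r lam := by
      by_contra hb
      push_neg at hb
      nlinarith [hab, ha]
    calc x (τ + 1) - x τ ≤ c ^ τ * bcrit r lam := hgeo lam a hlam ha hab x hx0 hrec τ
      _ ≤ η * bcrit r lam := mul_le_mul_of_nonneg_right (hτ).le hb0
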